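/- arXiv:2605.23016 — 5 statements merged into one kernel-verified Lean document; each statement's English description precedes it below -/
import Mathlib

section
/- Consider the continuous relaxation of the bi-fidelity MFMC optimization: minimize v(n₀, n₁) = 1/n₀ − (1/n₀ − 1/n₁)ρ² over positive reals n₀ ≤ n₁ subject to c₀n₀ + c₁n₁ ≤ C, where 0 < ρ < 1, c₀, c₁, C > 0. If c₀/c₁ > ρ⁻² − 1, then the minimizer is given by r = √(c₀ρ²/(c₁(1−ρ²))), n₀* = C/(c₀ + c₁r), n₁* = n₀*·r, and r > 1 so the constraint n₀ ≤ n₁ is satisfied. -/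
/-- Continuous relaxation of the bi-fidelity MFMC optimization:
minimize `v(n₀, n₁) = 1/n₀ − (1/n₀ − 1/n₁)ρ²` over positive reals `n₀ ≤ n₁`
subject to `c₀n₀ + c₁n₁ ≤ C`.  If `c₀/c₁ > ρ⁻² − 1`, then the minimizer is
`n₀* = C/(c₀ + c₁ r)`, `n₁* = n₀* r` with `r = √(c₀ρ²/(c₁(1−ρ²)))`, and
`r > 1` so the nesting constraint is satisfied. -/
theorem stmt_2 (ρ c₀ c₁ C : ℝ) (hρ : 0 < ρ ∧ ρ < 1) (hc₁ : 0 < c₁) (hc : c₁ < c₀)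
    (hC : 0 < C) (hcond : c₀ / c₁ > ρ⁻¹ ^ 2 - 1)
    (r n₀s n₁s : ℝ)
    (hr : r = Real.sqrt (c₀ * ρ ^ 2 / (c₁ * (1 - ρ ^ 2))))
    (hn₀ : n₀s = C / (c₀ + c₁ * r)) (hn₁ : n₁s = n₀s * r) :
    1 < r ∧ 0 < n₀s ∧ n₀s ≤ n₁s ∧ c₀ * n₀s + c₁ * n₁s ≤ C ∧
      ∀ m₀ m₁ : ℝ, 0 < m₀ → m₀ ≤ m₁ → c₀ * m₀ + c₁ * m₁ ≤ C →
        1 / n₀s - (1 / n₀s - 1 / n₁s) * ρ ^ 2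
          ≤ 1 / m₀ - (1 / m₀ - 1 / m₁) * ρ ^ 2 := by
  obtain ⟨hρ0, hρ1⟩ := hρ
  have hc₀ : 0 < c₀ := hc₁.trans hc
  have hA : 0 < 1 - ρ ^ 2 := by nlinarith
  have harg : 0 < c₀ * ρ ^ 2 / (c₁ * (1 - ρ ^ 2)) := by positivity
  have hr2 : r ^ 2 = c₀ * ρ ^ 2 / (c₁ * (1 - ρ ^ 2)) := by
    rw [hr, Real.sq_sqrt harg.le]
  have hr2' : c₁ * (1 - ρ ^ 2) * r ^ 2 = c₀ * ρ ^ 2 := by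
    field_simp at hr2 ⊢; linarith [hr2]
  have hrpos : 0 < r := hr ▸ Real.sqrt_pos.mpr harg
  have hcond' : c₁ * (1 - ρ ^ 2) < c₀ * ρ ^ 2 := by
    have h := (lt_div_iff₀ hc₁).mp hcond
    have hinv : ρ⁻¹ ^ 2 * ρ ^ 2 = 1 := by field_simp
    nlinarith [mul_lt_mul_of_pos_right h (pow_pos hρ0 2)]
  have hr1 : 1 < r := by
    have hr2gt : 1 < r ^ 2 := by
      rw [hr2, lt_div_iff₀ (by positivity)]; nlinarith
    nlinarith
  have hden : 0 < c₀ + c₁ * r := by positivity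
  have hn₀pos : 0 < n₀s := by rw [hn₀]; positivity
  refine ⟨hr1, hn₀pos, ?_, ?_, ?_⟩
  · rw [hn₁]; nlinarith
  · rw [hn₁, hn₀]
    apply le_of_eq; field_simp
  · intro m₀ m₁ hm₀ hm01 hbud
    have hm₁ : 0 < m₁ := hm₀.trans_le hm01
    rw [hn₁, hn₀]
    have key : (c₀ + c₁ * r) * ((1 - ρ ^ 2) + ρ ^ 2 / r) ≤
        ((1 - ρ ^ 2) / m₀ + ρ ^ 2 / m₁) * C := by
      have h1 : (c₀ + c₁ * r) * ((1 - ρ ^ 2) + ρ ^ 2 / r) ≤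
          ((1 - ρ ^ 2) / m₀ + ρ ^ 2 / m₁) * (c₀ * m₀ + c₁ * m₁) := by
        rw [div_add_div _ _ (ne_of_gt hm₀) (ne_of_gt hm₁)]
        rw [div_mul_eq_mul_div, le_div_iff₀ (by positivity)]
        have hx : 0 < m₀ * m₁ := by positivity
        field_simp
        refine le_of_mul_le_mul_right ?_ hrpos
        have hz : (c₁ * (1 - ρ ^ 2) * r ^ 2 - c₀ * ρ ^ 2) * (m₁ * (m₁ - r * m₀)) = 0 := by
          rw [hr2', sub_self, zero_mul]
        nlinarith [hz, mul_nonneg (mul_nonneg hc₀.le (sq_nonneg ρ)) (sq_nonneg (m₁ - r * m₀))]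
      have h2 : ((1 - ρ ^ 2) / m₀ + ρ ^ 2 / m₁) * (c₀ * m₀ + c₁ * m₁) ≤
          ((1 - ρ ^ 2) / m₀ + ρ ^ 2 / m₁) * C := by
        apply mul_le_mul_of_nonneg_left hbud; positivity
      linarith
    have hvstar : 1 / (C / (c₀ + c₁ * r)) - (1 / (C / (c₀ + c₁ * r)) -
        1 / (C / (c₀ + c₁ * r) * r)) * ρ ^ 2 =
        (c₀ + c₁ * r) * ((1 - ρ ^ 2) + ρ ^ 2 / r) / C := by
      field_simp; ring
    have hvm : 1 / m₀ - (1 / m₀ - 1 / m₁) * ρ ^ 2 =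
        (1 - ρ ^ 2) / m₀ + ρ ^ 2 / m₁ := by
      field_simp; ring
    rw [hvstar, hvm, div_le_iff₀ hC]
    exact key
end

section
/- With the condition c₀/c₁ > ρ⁻² − 1 and r = √(c₀ρ²/(c₁(1−ρ²))), the optimal bi-fidelity MFMC variance at the continuous-relaxation optimum (n₀*, n₁*) = (C/(c₀+c₁r), r·C/(c₀+c₁r)) equals (1/C)·(√(c₀(1−ρ²)) + √(c₁ρ²))², i.e., v(n₀*, n₁*) = (√(c₀(1−ρ²)) + √(c₁)·|ρ|)²/C. -/
open Real

/-- With the condition `c₀/c₁ > ρ⁻² − 1` and `r = √(c₀ρ²/(c₁(1−ρ²)))`,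
the optimal bi-fidelity MFMC variance at the continuous-relaxation optimum
`(n₀*, n₁*) = (C/(c₀+c₁r), r·C/(c₀+c₁r))` equals
`(√(c₀(1−ρ²)) + √(c₁)·|ρ|)² / C`. -/
theorem stmt_3 (ρ c₀ c₁ C : ℝ) (hρ : 0 < ρ ∧ ρ < 1) (hc₁ : 0 < c₁) (hc : c₁ < c₀)
    (hC : 0 < C) (hcond : c₀ / c₁ > ρ⁻¹ ^ 2 - 1)
    (r n₀s n₁s : ℝ)
    (hr : r = Real.sqrt (c₀ * ρ ^ 2 / (c₁ * (1 - ρ ^ 2))))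
    (hn₀ : n₀s = C / (c₀ + c₁ * r)) (hn₁ : n₁s = n₀s * r) :
    1 / n₀s - (1 / n₀s - 1 / n₁s) * ρ ^ 2
      = (Real.sqrt (c₀ * (1 - ρ ^ 2)) + Real.sqrt c₁ * |ρ|) ^ 2 / C := by
  obtain ⟨hρ0, hρ1⟩ := hρ
  have h1 : 0 < 1 - ρ ^ 2 := by nlinarith
  have hc₀ : 0 < c₀ := hc₁.trans hc
  have habs : |ρ| = ρ := abs_of_pos hρ0
  have hr0 : 0 < r := by
    rw [hr]; exact Real.sqrt_pos.mpr (by positivity)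
  have hr2 : r ^ 2 = c₀ * ρ ^ 2 / (c₁ * (1 - ρ ^ 2)) := by
    rw [hr, sq_sqrt (by positivity)]
  have hs0 : (0:ℝ) ≤ Real.sqrt (c₀ * (1 - ρ ^ 2)) := Real.sqrt_nonneg _
  have hs1 : (0:ℝ) ≤ Real.sqrt c₁ := Real.sqrt_nonneg _
  have hsq0 : Real.sqrt (c₀ * (1 - ρ ^ 2)) ^ 2 = c₀ * (1 - ρ ^ 2) :=
    sq_sqrt (by positivity)
  have hsq1 : Real.sqrt c₁ ^ 2 = c₁ := sq_sqrt hc₁.le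
  have key : c₁ * (1 - ρ ^ 2) * r = Real.sqrt (c₀ * (1 - ρ ^ 2)) * Real.sqrt c₁ * ρ := by
    have h2 : (c₁ * (1 - ρ ^ 2) * r) ^ 2
        = (Real.sqrt (c₀ * (1 - ρ ^ 2)) * Real.sqrt c₁ * ρ) ^ 2 := by
      rw [mul_pow, mul_pow, mul_pow, mul_pow, hr2, hsq0, hsq1]
      field_simp
    have hL : 0 ≤ c₁ * (1 - ρ ^ 2) * r := by positivity
    have hR : 0 ≤ Real.sqrt (c₀ * (1 - ρ ^ 2)) * Real.sqrt c₁ * ρ := by positivity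
    nlinarith [h2, hL, hR]
  have hden : 0 < c₀ + c₁ * r := by positivity
  have hn0pos : 0 < n₀s := by rw [hn₀]; positivity
  have hn1pos : 0 < n₁s := by rw [hn₁]; positivity
  rw [habs]
  subst hn₁ hn₀
  have hr2' : c₁ * (1 - ρ ^ 2) * r ^ 2 = c₀ * ρ ^ 2 := by
    rw [hr2]; field_simp
  field_simp
  linear_combination (-r * hsq0 - ρ ^ 2 * r * hsq1 + 2 * r * key - hr2')
end

section
/- For the general M-model MFMC variance v(p; Σ) = σ₀²/n₀ + ∑_{i=1}^{M−1} (1/n_{i−1} − 1/n_i)(wᵢ²σᵢ² − 2wᵢρ_{0,i}σ₀σᵢ) with fixed allocations n₀ ≤ n₁ ≤ … ≤ n_{M−1} (strictly positive), the weights minimizing v are wᵢ* = ρ_{0,i}σ₀/σᵢ, and substituting these yields v(p*; Σ) = σ₀² ∑_{i=0}^{M−1} Sᵢ/nᵢ, where S₀ = 1 − ρ_{0,1}², Sᵢ = ρ_{0,i}² − ρ_{0,i+1}² for 0 < i < M−1, and S_{M−1} = ρ_{0,M−1}². -/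
lemma abel_tele (f g : ℕ → ℝ) :
    ∀ M, 2 ≤ M →
      ∑ i ∈ Finset.Ico 1 M, (g (i - 1) - g i) * f i =
        f 1 * g 0 - f (M - 1) * g (M - 1) +
          ∑ i ∈ Finset.Ico 1 (M - 1), (f (i + 1) - f i) * g i := by
  intro M hM
  induction M, hM using Nat.le_induction with
  | base =>
    norm_num
    ring
  | succ M hM ih =>
    rw [Finset.sum_Ico_succ_top (by omega : 1 ≤ M), ih]
    have h1 : M + 1 - 1 = (M - 1) + 1 := by omega
    rw [h1, Finset.sum_Ico_succ_top (by omega : 1 ≤ M - 1),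
      (by omega : M - 1 + 1 = M)]
    ring

/-- General M-model MFMC: for
`v(w) = σ₀²/n₀ + ∑_{i=1}^{M−1} (1/n_{i−1} − 1/n_i)(wᵢ²σᵢ² − 2wᵢρᵢσ₀σᵢ)`
with fixed strictly increasing positive allocations, the minimizing weights
are `wᵢ* = ρᵢσ₀/σᵢ`, and substituting them yields
`v(w*) = σ₀² ∑_{i<M} Sᵢ/nᵢ` with `S₀ = 1 − ρ₁²`, `Sᵢ = ρᵢ² − ρ_{i+1}²`
for `0 < i < M−1`, and `S_{M−1} = ρ_{M−1}²`. -/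
theorem stmt_9 (M : ℕ) (hM : 2 ≤ M) (σ ρ n : ℕ → ℝ)
    (hσ : ∀ i < M, 0 < σ i)
    (hρ : ∀ i, 1 ≤ i → i < M → ρ i ∈ Set.Ioo (-1 : ℝ) 1)
    (hn0 : 0 < n 0)
    (hn : ∀ i, 1 ≤ i → i < M → n (i - 1) < n i)
    (v : (ℕ → ℝ) → ℝ)
    (hv : ∀ w, v w = σ 0 ^ 2 / n 0 +
      ∑ i ∈ Finset.Ico 1 M, (1 / n (i - 1) - 1 / n i) *
        (w i ^ 2 * σ i ^ 2 - 2 * w i * ρ i * σ 0 * σ i))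
    (wstar : ℕ → ℝ) (hws : ∀ i, wstar i = ρ i * σ 0 / σ i)
    (S : ℕ → ℝ)
    (hS0 : S 0 = 1 - ρ 1 ^ 2)
    (hSmid : ∀ i, 0 < i → i < M - 1 → S i = ρ i ^ 2 - ρ (i + 1) ^ 2)
    (hSlast : S (M - 1) = ρ (M - 1) ^ 2) :
    (∀ w : ℕ → ℝ, v wstar ≤ v w) ∧
      v wstar = σ 0 ^ 2 * ∑ i ∈ Finset.range M, S i / n i := by
  have hnpos : ∀ i, i < M → 0 < n i := by
    intro i
    induction i with
    | zero => intro _; exact hn0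
    | succ k ih =>
      intro h
      have h2 := hn (k + 1) (by omega) h
      simp only [Nat.add_sub_cancel] at h2
      exact lt_trans (ih (by omega)) h2
  have hc : ∀ i, 1 ≤ i → i < M → 0 < 1 / n (i - 1) - 1 / n i := by
    intro i h1 h2
    have ha : 0 < n (i - 1) := hnpos _ (by omega)
    have hb : n (i - 1) < n i := hn i h1 h2
    have := one_div_lt_one_div_of_lt ha hb
    linarith
  -- the value of each quadratic at the minimizer
  have hterm : ∀ i, i < M →
      wstar i ^ 2 * σ i ^ 2 - 2 * wstar i * ρ i * σ 0 * σ i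
        = -(ρ i ^ 2 * σ 0 ^ 2) := by
    intro i hi
    have h0 : σ i ≠ 0 := ne_of_gt (hσ i hi)
    rw [hws]
    field_simp
    ring
  constructor
  · intro w
    rw [hv, hv]
    apply add_le_add le_rfl
    apply Finset.sum_le_sum
    intro i hi
    obtain ⟨h1, h2⟩ := Finset.mem_Ico.mp hi
    apply mul_le_mul_of_nonneg_left _ (hc i h1 h2).le
    rw [hterm i h2]
    nlinarith [sq_nonneg (w i * σ i - ρ i * σ 0)]
  · rw [hv]
    have hsum1 : ∑ i ∈ Finset.Ico 1 M, (1 / n (i - 1) - 1 / n i) *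
        (wstar i ^ 2 * σ i ^ 2 - 2 * wstar i * ρ i * σ 0 * σ i)
        = -(∑ i ∈ Finset.Ico 1 M, (1 / n (i - 1) - 1 / n i) * ρ i ^ 2) * σ 0 ^ 2 := by
      rw [neg_mul, Finset.sum_mul, ← Finset.sum_neg_distrib]
      apply Finset.sum_congr rfl
      intro i hi
      obtain ⟨h1, h2⟩ := Finset.mem_Ico.mp hi
      rw [hterm i h2]
      ring
    rw [hsum1]
    have key : ∑ i ∈ Finset.Ico 1 M, (1 / n (i - 1) - 1 / n i) * ρ i ^ 2 =
        ρ 1 ^ 2 * (1 / n 0) - ρ (M - 1) ^ 2 * (1 / n (M - 1)) +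
          ∑ i ∈ Finset.Ico 1 (M - 1), (ρ (i + 1) ^ 2 - ρ i ^ 2) * (1 / n i) :=
      abel_tele (fun i => ρ i ^ 2) (fun i => 1 / n i) M hM
    have hsplit : ∑ i ∈ Finset.range M, S i / n i
        = S 0 / n 0 + ∑ i ∈ Finset.Ico 1 M, S i / n i := by
      rw [Finset.range_eq_Ico, Finset.sum_eq_sum_Ico_succ_bot (by omega)]
    have htop : ∑ i ∈ Finset.Ico 1 M, S i / n i
        = ∑ i ∈ Finset.Ico 1 (M - 1), S i / n i + S (M - 1) / n (M - 1) := by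
      conv_lhs => rw [(by omega : M = (M - 1) + 1)]
      rw [Finset.sum_Ico_succ_top (by omega : 1 ≤ M - 1)]
    have hmid : ∑ i ∈ Finset.Ico 1 (M - 1), S i / n i
        = -∑ i ∈ Finset.Ico 1 (M - 1), (ρ (i + 1) ^ 2 - ρ i ^ 2) * (1 / n i) := by
      rw [← Finset.sum_neg_distrib]
      apply Finset.sum_congr rfl
      intro i hi
      obtain ⟨h1, h2⟩ := Finset.mem_Ico.mp hi
      rw [hSmid i (by omega) h2]
      ring
    rw [hsplit, htop, hmid, hS0, hSlast, key]
    ring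
end

section
/- For the two-term isotonic problem: minimize S₀/n₀ + S₁/n₁ over 0 < n₀ ≤ n₁ with c₀n₀ + c₁n₁ = C, if S₀/c₀ > S₁/c₁ (a pooling violation) then the minimum is attained at n₀ = n₁ = C/(c₀ + c₁), with minimum value (S₀ + S₁)(c₀ + c₁)/C. -/
/-- Two-term isotonic problem: minimize `S₀/n₀ + S₁/n₁` over `0 < n₀ ≤ n₁`
with `c₀n₀ + c₁n₁ = C`.  If `S₀/c₀ > S₁/c₁` (a pooling violation) then the
minimum is attained at `n₀ = n₁ = C/(c₀ + c₁)`, with minimum value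
`(S₀ + S₁)(c₀ + c₁)/C`. -/
theorem stmt_11 (S₀ S₁ c₀ c₁ C : ℝ) (hS₀ : 0 < S₀) (hS₁ : 0 < S₁)
    (hc₀ : 0 < c₀) (hc₁ : 0 < c₁) (hC : 0 < C)
    (hviol : S₀ / c₀ > S₁ / c₁) :
    (c₀ * (C / (c₀ + c₁)) + c₁ * (C / (c₀ + c₁)) = C) ∧
    (S₀ / (C / (c₀ + c₁)) + S₁ / (C / (c₀ + c₁)) = (S₀ + S₁) * (c₀ + c₁) / C) ∧
    (∀ n₀ n₁ : ℝ, 0 < n₀ → n₀ ≤ n₁ → c₀ * n₀ + c₁ * n₁ = C →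
      (S₀ + S₁) * (c₀ + c₁) / C ≤ S₀ / n₀ + S₁ / n₁) := by
  have hcc : 0 < c₀ + c₁ := by linarith
  have hkey : S₁ * c₀ ≤ S₀ * c₁ := by
    rw [gt_iff_lt, div_lt_div_iff₀ hc₁ hc₀] at hviol; linarith
  refine ⟨by field_simp, by field_simp, ?_⟩
  intro n₀ n₁ hn₀ h01 hcon
  have hn₁ : 0 < n₁ := lt_of_lt_of_le hn₀ h01
  have hfact : 0 ≤ (n₁ - n₀) * (S₀ * c₁ * n₁ - S₁ * c₀ * n₀) := by
    apply mul_nonneg (by linarith)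
    nlinarith [mul_le_mul hkey h01 hn₀.le (by positivity : (0:ℝ) ≤ S₀ * c₁)]
  rw [div_add_div _ _ (ne_of_gt hn₀) (ne_of_gt hn₁), div_le_div_iff₀ hC (by positivity)]
  subst hcon
  nlinarith [hfact]
end

section
/- Under the continuous relaxation and the condition c₀(1−ρ²) ≥ c₁ρ² failing — i.e., c₀/c₁ < ρ²/(1−ρ²) holding so that r = √(c₀ρ²/(c₁(1−ρ²))) > 1 — the optimal bi-fidelity MFMC variance (√(c₀(1−ρ²)) + √(c₁)ρ)²/C is strictly smaller than the hifi-only MC variance c₀/C if and only if √(1−ρ²) + √(c₁/c₀)·ρ < 1, which holds iff ρ² > 4(c₁/c₀)/(1 + c₁/c₀)² ... equivalently iff ρ > 2√(c₀c₁)/(c₀ + c₁). -/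
/-- The optimal bi-fidelity MFMC variance `(√(c₀(1−ρ²)) + √(c₁)ρ)²/C` is
strictly smaller than the hifi-only MC variance `c₀/C` iff
`√(1−ρ²) + √(c₁/c₀)·ρ < 1`, iff `ρ² > 4(c₁/c₀)/(1 + c₁/c₀)²`, equivalently
iff `ρ > 2√(c₀c₁)/(c₀ + c₁)`. -/
theorem stmt_19 (ρ c₀ c₁ C : ℝ) (hρ : ρ ∈ Set.Ioo (0 : ℝ) 1)
    (hc₁ : 0 < c₁) (hc : c₁ < c₀) (hC : 0 < C)
    (hcond : c₀ / c₁ > ρ⁻¹ ^ 2 - 1) :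
    ((Real.sqrt (c₀ * (1 - ρ ^ 2)) + Real.sqrt c₁ * ρ) ^ 2 / C < c₀ / C ↔
      Real.sqrt (1 - ρ ^ 2) + Real.sqrt (c₁ / c₀) * ρ < 1) ∧
    (Real.sqrt (1 - ρ ^ 2) + Real.sqrt (c₁ / c₀) * ρ < 1 ↔
      ρ ^ 2 > 4 * (c₁ / c₀) / (1 + c₁ / c₀) ^ 2) ∧
    (ρ ^ 2 > 4 * (c₁ / c₀) / (1 + c₁ / c₀) ^ 2 ↔
      ρ > 2 * Real.sqrt (c₀ * c₁) / (c₀ + c₁)) := by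
  clear hcond
  obtain ⟨hρ0, hρ1⟩ := hρ
  have hc₀ : 0 < c₀ := hc₁.trans hc
  set t := Real.sqrt (c₁ / c₀) with ht_def
  have ht0 : 0 < t := Real.sqrt_pos.mpr (div_pos hc₁ hc₀)
  have ht2 : t ^ 2 = c₁ / c₀ := Real.sq_sqrt (le_of_lt (div_pos hc₁ hc₀))
  have ht1 : t < 1 := by
    nlinarith [ht2, (div_lt_one hc₀).mpr hc]
  have hρ2 : ρ ^ 2 < 1 := by nlinarith
  have hs0 : 0 ≤ Real.sqrt (1 - ρ ^ 2) := Real.sqrt_nonneg _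
  have hs2 : (Real.sqrt (1 - ρ ^ 2)) ^ 2 = 1 - ρ ^ 2 :=
    Real.sq_sqrt (by nlinarith)
  have hsqc₀ : 0 < Real.sqrt c₀ := Real.sqrt_pos.mpr hc₀
  have hsplit : Real.sqrt (c₀ * (1 - ρ ^ 2)) = Real.sqrt c₀ * Real.sqrt (1 - ρ ^ 2) :=
    Real.sqrt_mul (le_of_lt hc₀) _
  have hc₁t : Real.sqrt c₁ = Real.sqrt c₀ * t := by
    rw [ht_def, ← Real.sqrt_mul (le_of_lt hc₀)]
    congr 1
    field_simp
  have key : ∀ x : ℝ, x < 1 ↔ Real.sqrt c₀ * x < Real.sqrt c₀ := by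
    intro x
    constructor
    · intro h; nlinarith
    · intro h; nlinarith
  refine ⟨?_, ?_, ?_⟩
  · rw [div_lt_div_iff_of_pos_right hC]
    have hsumnn : 0 ≤ Real.sqrt (c₀ * (1 - ρ ^ 2)) + Real.sqrt c₁ * ρ := by
      have := Real.sqrt_nonneg (c₀ * (1 - ρ ^ 2))
      have := Real.sqrt_nonneg c₁
      nlinarith
    rw [← Real.lt_sqrt hsumnn, hsplit, hc₁t]
    have he : Real.sqrt c₀ * Real.sqrt (1 - ρ ^ 2) + Real.sqrt c₀ * t * ρ =
        Real.sqrt c₀ * (Real.sqrt (1 - ρ ^ 2) + t * ρ) := by ring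
    rw [he]
    exact (key _).symm
  · have h1t : (0:ℝ) < 1 + t ^ 2 := by positivity
    have hrhs : 4 * (c₁ / c₀) / (1 + c₁ / c₀) ^ 2 = (2 * t / (1 + t ^ 2)) ^ 2 := by
      rw [← ht2]; field_simp; ring
    rw [hrhs]
    have hlhs : Real.sqrt (1 - ρ ^ 2) + t * ρ < 1 ↔ ρ * (1 + t ^ 2) > 2 * t := by
      constructor
      have hid : (1 - t * ρ) ^ 2 - (1 - ρ ^ 2) = ρ * (ρ * (1 + t ^ 2) - 2 * t) := by
        ring
      · intro h
        have h1 : Real.sqrt (1 - ρ ^ 2) < 1 - t * ρ := by linarith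
        have h2 : 1 - ρ ^ 2 < (1 - t * ρ) ^ 2 := by
          have := Real.sqrt_lt' (y := 1 - t * ρ) ?_ |>.mp h1
          · exact this
          · linarith [hs0]
        nlinarith [hid, mul_pos hρ0 hρ0]
      · intro h
        have h1 : (0:ℝ) < 1 - t * ρ := by nlinarith [mul_pos ht0 hρ0]
        have h2 : 1 - ρ ^ 2 < (1 - t * ρ) ^ 2 := by
          nlinarith [mul_pos hρ0 (show (0:ℝ) < ρ * (1 + t ^ 2) - 2 * t by linarith)]
        have := (Real.sqrt_lt' h1).mpr h2
        linarith
    rw [hlhs]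
    rw [show ρ ^ 2 > (2 * t / (1 + t ^ 2)) ^ 2 ↔ 2 * t / (1 + t ^ 2) < ρ from
      pow_lt_pow_iff_left₀ (by positivity) (le_of_lt hρ0) (by norm_num)]
    rw [div_lt_iff₀ h1t]
  · have hsqrt : Real.sqrt (c₀ * c₁) = c₀ * t := by
      rw [show c₀ * c₁ = (c₀ * t) ^ 2 by rw [mul_pow, ht2]; field_simp,
        Real.sqrt_sq (by positivity)]
    rw [hsqrt]
    have h1t : (0:ℝ) < 1 + t ^ 2 := by positivity
    have heq : 2 * (c₀ * t) / (c₀ + c₁) = 2 * t / (1 + t ^ 2) := by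
      have : c₀ + c₁ = c₀ * (1 + t ^ 2) := by rw [ht2]; field_simp
      rw [this]; field_simp
    rw [heq]
    have hrhs : 4 * (c₁ / c₀) / (1 + c₁ / c₀) ^ 2 = (2 * t / (1 + t ^ 2)) ^ 2 := by
      rw [← ht2]; field_simp; ring
    rw [hrhs]
    exact pow_lt_pow_iff_left₀ (by positivity) (le_of_lt hρ0) (by norm_num)
end
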